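/- arXiv:1309.3717 — 2 statements merged into one kernel-verified Lean document; each statement's English description precedes it below -/
import Mathlib

section
/- Let N be a squarefree positive integer and, for each prime p dividing N, let δ_p ∈ {1, p^{k-1}} where k ≥ 4 is even. If l is a prime not dividing N such that for every prime p | N with δ_p = 1 we have p^k ≡ 1 (mod l), and there exists at least one prime p₀ | N with δ_{p₀} = 1, then for every divisor v of N, the product ∏_{p | N} (1 - δ_p (gcd(p,v)/p)^k), viewed as a rational number, has numerator divisible by l. -/
theorem constant_terms_vanish (N k l : ℕ) (hN : 0 < N) (hNsf : Squarefree N)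
    (hk : 4 ≤ k) (hke : Even k) (hl : l.Prime) (hlN : ¬ l ∣ N)
    (δ : ℕ → ℚ) (hδ : ∀ p ∈ N.primeFactors, δ p = 1 ∨ δ p = (p : ℚ) ^ (k - 1))
    (hcong : ∀ p ∈ N.primeFactors, δ p = 1 → (p : ZMod l) ^ k = 1)
    (hex : ∃ p₀ ∈ N.primeFactors, δ p₀ = 1)
    (v : ℕ) (hv : v ∣ N) :
    (l : ℤ) ∣ (∏ p ∈ N.primeFactors,
      (1 - δ p * ((Nat.gcd p v : ℚ) / (p : ℚ)) ^ k)).num := by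
  haveI : Fact l.Prime := ⟨hl⟩
  set P : ℚ := ∏ p ∈ N.primeFactors,
      (1 - δ p * ((Nat.gcd p v : ℚ) / (p : ℚ)) ^ k) with hP
  -- Write each factor as an integer over p ^ k.
  have hfac : ∀ p ∈ N.primeFactors,
      (1 - δ p * ((Nat.gcd p v : ℚ) / (p : ℚ)) ^ k)
        = ((p : ℚ) ^ k - δ p * (Nat.gcd p v : ℚ) ^ k) / (p : ℚ) ^ k := by
    intro p hp
    have hp0 : (p : ℚ) ≠ 0 := by
      exact_mod_cast (Nat.prime_of_mem_primeFactors hp).ne_zero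
    field_simp
    rw [div_pow, sub_mul, one_mul, mul_assoc, div_mul_cancel₀ _ (pow_ne_zero _ hp0)]
  have hint : ∀ p ∈ N.primeFactors, ∃ a : ℤ,
      (a : ℚ) = (p : ℚ) ^ k - δ p * (Nat.gcd p v : ℚ) ^ k := by
    intro p hp
    rcases hδ p hp with h1 | h1
    · exact ⟨(p : ℤ) ^ k - (Nat.gcd p v : ℤ) ^ k, by push_cast [h1]; ring⟩
    · exact ⟨(p : ℤ) ^ k - (p : ℤ) ^ (k - 1) * (Nat.gcd p v : ℤ) ^ k, by
        push_cast [h1]; ring⟩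
  choose a ha using hint
  set A : ℤ := ∏ p ∈ N.primeFactors.attach, a p.1 p.2 with hA
  have hPeq : P = (A : ℚ) / ((N : ℚ) ^ k) := by
    have hNprod : (∏ p ∈ N.primeFactors, (p : ℚ) ^ k) = (N : ℚ) ^ k := by
      rw [Finset.prod_pow, ← Nat.cast_prod, Nat.prod_primeFactors_of_squarefree hNsf]
    rw [hP, ← hNprod, ← Finset.prod_attach N.primeFactors
      (fun p => (1 - δ p * ((Nat.gcd p v : ℚ) / (p : ℚ)) ^ k)),
      ← Finset.prod_attach N.primeFactors (fun p => (p : ℚ) ^ k), hA]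
    push_cast
    rw [← Finset.prod_div_distrib]
    refine Finset.prod_congr rfl fun p _ => ?_
    rw [ha p.1 p.2, ← hfac p.1 p.2]
  -- l divides the factor of A at p₀.
  obtain ⟨p₀, hp₀mem, hp₀δ⟩ := hex
  have hp₀ : p₀.Prime := Nat.prime_of_mem_primeFactors hp₀mem
  have haval : a p₀ hp₀mem = (p₀ : ℤ) ^ k - (Nat.gcd p₀ v : ℤ) ^ k := by
    have h := ha p₀ hp₀mem
    rw [hp₀δ, one_mul] at h
    exact_mod_cast h
  have hlA : (l : ℤ) ∣ A := by
    refine dvd_trans ?_ (Finset.dvd_prod_of_mem (fun p => a p.1 p.2)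
      (Finset.mem_attach _ (⟨p₀, hp₀mem⟩ : {x // x ∈ N.primeFactors})))
    rw [haval, ← ZMod.intCast_zmod_eq_zero_iff_dvd]
    by_cases hdvd : p₀ ∣ v
    · rw [Nat.gcd_eq_left hdvd]; push_cast; ring
    · rw [(hp₀.coprime_iff_not_dvd.mpr hdvd : Nat.gcd p₀ v = 1)]
      push_cast
      rw [hcong p₀ hp₀mem hp₀δ, one_pow, sub_self]
  -- Cross-multiply: P.num * N ^ k = A * P.den.
  have hNk0 : ((N : ℚ) ^ k) ≠ 0 := by
    positivity
  have hden0 : ((P.den : ℚ)) ≠ 0 := by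
    exact_mod_cast P.den_nz
  have key : P.num * (N : ℤ) ^ k = A * (P.den : ℤ) := by
    have h1 : (P.num : ℚ) / (P.den : ℚ) = (A : ℚ) / ((N : ℚ) ^ k) := by
      rw [Rat.num_div_den]; exact hPeq
    have h2 := (div_eq_div_iff hden0 hNk0).mp h1
    exact_mod_cast h2
  have hdvd : (l : ℤ) ∣ P.num * (N : ℤ) ^ k := key ▸ hlA.mul_right _
  have hlZ : Prime (l : ℤ) := Nat.prime_iff_prime_int.mp hl
  rcases hlZ.dvd_mul.mp hdvd with h | h
  · exact h
  · exact absurd (by exact_mod_cast hlZ.dvd_of_dvd_pow h : l ∣ N) hlN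
end

section
/- Let M, v be positive integers with u an integer coprime to v·M'/r where r = gcd(v,M). Let c, d be integers with c·M·u + d·v = 0 and u ≠ 0. Write M' = M/r and v' = v/r. If N | c, d ≡ j (mod N) with gcd(j,N) = 1, then N | v' and M'·u | d. Conversely, if N | v' and M'·u | d, then c := -d·v/(M·u) is an integer with c·M·u + d·v = 0 and N | c. -/
theorem divisibility_equivalence (M N u v β δ j d : ℤ)
    (hM : 1 ≤ M) (hN : 1 ≤ N) (hdet : u * δ - v * β = 1) (hu : u ≠ 0)
    (hNM : IsCoprime N M) (hj : IsCoprime j N) (hd : N ∣ d - j) :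
    (∃ c : ℤ, N ∣ c ∧ c * M * u + d * v = 0) ↔
      (N ∣ v / (Int.gcd v M : ℤ) ∧ (M / (Int.gcd v M : ℤ)) * u ∣ d) := by
  set r : ℤ := (Int.gcd v M : ℤ) with hr
  have hrv : r ∣ v := Int.gcd_dvd_left v M
  have hrM : r ∣ M := Int.gcd_dvd_right v M
  have hgpos : 0 < Int.gcd v M := by
    rcases Nat.eq_zero_or_pos (Int.gcd v M) with h | h
    · exact absurd (Int.gcd_eq_zero_iff.mp h).2 (by omega)
    · exact h
  have hr0 : r ≠ 0 := by
    simp only [hr, Int.natCast_ne_zero]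
    omega
  have hv : v = r * (v / r) := (Int.mul_ediv_cancel' hrv).symm
  have hMe : M = r * (M / r) := (Int.mul_ediv_cancel' hrM).symm
  have huv : IsCoprime u v := ⟨δ, -β, by linarith⟩
  have huv' : IsCoprime u (v / r) := huv.of_isCoprime_of_dvd_right ⟨r, by linarith [hv]⟩
  have hcop : IsCoprime (v / r) (M / r) := by
    rw [Int.isCoprime_iff_gcd_eq_one]
    exact Int.gcd_div_gcd_div_gcd hgpos
  have hdN : IsCoprime d N := by
    obtain ⟨k, hk⟩ := hd
    have : d = j + N * k := by linarith
    rw [this]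
    exact hj.add_mul_left_left k
  constructor
  · rintro ⟨c, hNc, heq⟩
    have key : c * (M / r) * u = -(d * (v / r)) := by
      have h2 : r * (c * (M / r) * u) = r * (-(d * (v / r))) := by
        linear_combination heq - (c * u) * hMe - d * hv
      exact mul_left_cancel₀ hr0 h2
    constructor
    · have hNd : N ∣ d * (v / r) := by
        obtain ⟨k, hk⟩ := hNc
        exact ⟨-(k * (M / r) * u), by rw [← neg_eq_iff_eq_neg.mpr key, hk]; ring⟩
      exact (hdN.symm).dvd_of_dvd_mul_left hNd
    · have h1 : IsCoprime ((M / r) * u) (v / r) := IsCoprime.mul_left hcop.symm huv'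
      have h2 : (M / r) * u ∣ d * (v / r) := ⟨-c, by rw [← neg_eq_iff_eq_neg.mpr key]; ring⟩
      exact h1.dvd_of_dvd_mul_right h2
  · rintro ⟨hNv', ⟨k, hk⟩⟩
    refine ⟨-(k * (v / r)), hNv'.mul_left k |>.neg_right, ?_⟩
    rw [hk]
    linear_combination (-(k * (v / r)) * u) * hMe + ((M / r) * u * k) * hv
end
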